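/- Fix an integer m ≥ 1 and a free group F. Define a relation on the set of pairs {(x, y) ∈ F × F : y ≠ 1} by: (x₁, y₁) ∼ (x₂, y₂) if and only if y₁*y₂ = y₂*y₁ and there exists y ∈ F with y*y₁ = y₁*y and x₁⁻¹*x₂ = y^m. Then ∼ is an equivalence relation. -/

import Mathlib

open FreeGroup in
theorem chain'_imp_reduce {α : Type*} [DecidableEq α] (L : List (α × Bool))
    (h : L.Chain' (fun a b => ¬(b.1 = a.1 ∧ b.2 = !a.2))) : FreeGroup.reduce L = L := by
  induction L with
  | nil => rfl
  | cons a t ih =>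
    rw [FreeGroup.reduce.cons, ih h.tail]
    cases t with
    | nil => rfl
    | cons b t' =>
      have hab : ¬(b.1 = a.1 ∧ b.2 = !a.2) := List.isChain_cons_cons.mp h |>.1
      have : ¬(a.1 = b.1 ∧ a.2 = !b.2) := by
        rintro ⟨h1, h2⟩; exact hab ⟨h1.symm, by simp [h2]⟩
      simp [this]

open FreeGroup in
theorem reduce_imp_chain' {α : Type*} [DecidableEq α] (L : List (α × Bool))
    (h : FreeGroup.reduce L = L) : L.Chain' (fun a b => ¬(b.1 = a.1 ∧ b.2 = !a.2)) := by
  induction L with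
  | nil => exact List.isChain_nil
  | cons a t ih =>
    rw [FreeGroup.reduce.cons] at h
    rcases hr : FreeGroup.reduce t with _ | ⟨b, t'⟩
    · rw [hr] at h
      simp only at h
      have : t = [] := by simpa using congrArg List.tail h.symm
      subst this; exact List.isChain_singleton _
    · rw [hr] at h
      by_cases hc : a.1 = b.1 ∧ a.2 = !b.2
      · simp only [hc, if_true] at h
        exfalso
        have h1 : t'.length ≤ t.length - 1 := by
          have := FreeGroup.Red.length_le (FreeGroup.reduce.red (L := t))
          rw [hr] at this; simp at this; omega
        have h2 : t' = a :: t := h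
        have := congrArg List.length h2
        simp at this
        have ht : 1 ≤ t.length := by
          rcases t with _|_
          · simp [FreeGroup.reduce] at hr
          · simp
        omega
      · simp only [hc, if_false] at h
        have hbt : b :: t' = t := by simpa using congrArg List.tail h
        rw [← hbt] at ih ⊢
        refine List.isChain_cons_cons.mpr ⟨?_, ih (by rw [hbt, hr]; exact hbt)⟩
        rintro ⟨h1, h2⟩; exact hc ⟨h1.symm, by simp [h2]⟩

theorem cons_eq_append_replicate {β : Type*} (x : β) (l : List β)
    (h : x :: l = l ++ [x]) : l = List.replicate l.length x := by
  induction l with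
  | nil => rfl
  | cons y t ih =>
    simp only [List.cons_append, List.cons.injEq] at h
    obtain ⟨rfl, h2⟩ := h
    rw [List.length_cons, List.replicate_succ, ← ih h2]

theorem pick_letter {β : Type*} (x y : β) (hxy : x ≠ y) (f l : β × Bool) :
    ∃ q : β × Bool, (q.1 = x ∨ q.1 = y) ∧ q ≠ f ∧ q ≠ l := by
  by_contra hq
  have key : ∀ q : β × Bool, (q.1 = x ∨ q.1 = y) → q = f ∨ q = l := by
    intro q hc
    by_contra hn
    push_neg at hn
    exact hq ⟨q, hc, hn.1, hn.2⟩
  have h1 := key (x, false) (Or.inl rfl)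
  have h2 := key (x, true) (Or.inl rfl)
  have h3 := key (y, false) (Or.inr rfl)
  rcases h1 with h1|h1 <;> rcases h2 with h2|h2 <;> rcases h3 with h3|h3 <;>
    subst_vars <;> simp_all [Prod.ext_iff]

theorem freeGroup_center_triv {β : Type*} (x y : β) (hxy : x ≠ y) (z : FreeGroup β)
    (hz : ∀ u : FreeGroup β, z * u = u * z) : z = 1 := by
  classical
  by_contra hz1
  have hw : FreeGroup.reduce z.toWord = z.toWord := FreeGroup.reduce_toWord z
  have hwch := reduce_imp_chain' z.toWord hw
  have hwne : z.toWord ≠ [] := by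
    simpa [FreeGroup.toWord_eq_nil_iff] using hz1
  obtain ⟨q, hqxy, hqf, hql⟩ := pick_letter x y hxy (z.toWord.head hwne) (z.toWord.getLast hwne)
  set p : β × Bool := (q.1, !q.2) with hpdef
  have hqp : q = (p.1, !p.2) := by simp [hpdef]
  set g : FreeGroup β := FreeGroup.mk [p] with hgdef
  -- toWord (z * g) = z.toWord ++ [p]
  have h1 : (z * g).toWord = z.toWord ++ [p] := by
    conv_lhs => rw [← FreeGroup.mk_toWord (x := z)]
    rw [hgdef, FreeGroup.mul_mk, FreeGroup.toWord_mk]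
    apply chain'_imp_reduce
    apply List.IsChain.append hwch (List.isChain_singleton p)
    intro a ha b hb
    rw [List.getLast?_eq_getLast hwne] at ha
    simp only [Option.mem_some_iff, List.head?_cons, Option.some.injEq] at ha hb
    subst ha; subst hb
    rintro ⟨hc1, hc2⟩
    apply hql
    have e1 : q.1 = (z.toWord.getLast hwne).1 := hc1
    have e2 : (!q.2) = !(z.toWord.getLast hwne).2 := hc2
    have e2' : q.2 = (z.toWord.getLast hwne).2 := by simpa using e2
    exact Prod.ext e1 e2'
  -- toWord (g * z) = p :: z.toWord
  have h2 : (g * z).toWord = p :: z.toWord := by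
    conv_lhs => rw [← FreeGroup.mk_toWord (x := z)]
    rw [hgdef, FreeGroup.mul_mk, FreeGroup.toWord_mk]
    apply chain'_imp_reduce
    rw [List.singleton_append]; refine List.isChain_cons.mpr ?_
    refine ⟨?_, hwch⟩
    intro b hb
    rw [List.head?_eq_head hwne] at hb
    simp only [Option.mem_some_iff] at hb
    subst hb
    rintro ⟨hc1, hc2⟩
    apply hqf
    have e1 : q.1 = (z.toWord.head hwne).1 := by
      have : (z.toWord.head hwne).1 = p.1 := hc1
      exact this.symm
    have e2 : q.2 = (z.toWord.head hwne).2 := by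
      have : (z.toWord.head hwne).2 = !p.2 := hc2
      rw [this]; simp [hpdef]
    exact Prod.ext e1 e2
  -- hence z.toWord is a replicate of p
  have heq : p :: z.toWord = z.toWord ++ [p] := by
    rw [← h1, ← h2, hz g]
  have hrep := cons_eq_append_replicate p z.toWord heq
  -- pick the other generator d
  obtain ⟨d, hdxy, hdp⟩ : ∃ d : β, (d = x ∨ d = y) ∧ d ≠ p.1 := by
    rcases hqxy with h | h
    · exact ⟨y, Or.inr rfl, by rw [h]; exact hxy.symm⟩
    · exact ⟨x, Or.inl rfl, by rw [h]; exact hxy⟩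
  have hofd : FreeGroup.of d = FreeGroup.mk [(d, true)] := rfl
  have hnotR : ∀ a ∈ z.toWord.getLast?, ∀ b ∈ [((d, true) : β × Bool)].head?,
      ¬(b.1 = a.1 ∧ b.2 = !a.2) := by
    intro a ha b hb
    have ha' : a ∈ z.toWord := List.mem_of_mem_getLast? ha
    rw [hrep] at ha'
    have hap : a = p := List.eq_of_mem_replicate ha'
    simp only [List.head?_cons, Option.mem_some_iff] at hb
    subst hb; subst hap
    rintro ⟨hc1, _⟩
    exact hdp hc1
  have h3 : (z * FreeGroup.of d).toWord = z.toWord ++ [(d, true)] := by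
    conv_lhs => rw [← FreeGroup.mk_toWord (x := z)]
    rw [hofd, FreeGroup.mul_mk, FreeGroup.toWord_mk]
    exact chain'_imp_reduce _ (List.IsChain.append hwch (List.isChain_singleton _) hnotR)
  have h4 : (FreeGroup.of d * z).toWord = (d, true) :: z.toWord := by
    conv_lhs => rw [← FreeGroup.mk_toWord (x := z)]
    rw [hofd, FreeGroup.mul_mk, FreeGroup.toWord_mk]
    apply chain'_imp_reduce
    rw [List.singleton_append]; refine List.isChain_cons.mpr ?_
    refine ⟨?_, hwch⟩
    intro b hb
    have hb' : b ∈ z.toWord := List.mem_of_mem_head? hb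
    rw [hrep] at hb'
    have hbp : b = p := List.eq_of_mem_replicate hb'
    subst hbp
    rintro ⟨hc1, _⟩
    exact hdp hc1.symm
  have heq2 : z.toWord ++ [(d, true)] = (d, true) :: z.toWord := by
    rw [← h3, ← h4, hz (FreeGroup.of d)]
  have hhead := congrArg List.head? heq2
  obtain ⟨k, hk⟩ : ∃ k, z.toWord.length = k + 1 :=
    ⟨z.toWord.length - 1, by
      have := List.length_pos_iff.mpr hwne
      omega⟩
  rw [hk] at hrep
  rw [hrep] at hhead
  simp [List.replicate_succ] at hhead
  exact hdp (congrArg Prod.fst hhead).symm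

theorem freeGroup_centralizer_cyclic {α : Type*} (b : FreeGroup α) (hb : b ≠ 1) :
    ∃ g : FreeGroup α, Subgroup.centralizer {b} = Subgroup.zpowers g := by
  set C := Subgroup.centralizer ({b} : Set (FreeGroup α)) with hC
  have hbC : b ∈ C := Subgroup.mem_centralizer_iff.mpr (by rintro h rfl; rfl)
  letI : IsFreeGroup C := inferInstance
  set S := IsFreeGroup.Generators C with hS
  set e : C ≃* FreeGroup S := IsFreeGroup.toFreeGroup C with he
  set z : FreeGroup S := e ⟨b, hbC⟩ with hzdef
  have hzc : ∀ u : FreeGroup S, z * u = u * z := by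
    intro u
    set c : C := e.symm u with hc
    have hcb : b * (c : FreeGroup α) = (c : FreeGroup α) * b := by
      exact Subgroup.mem_centralizer_iff.mp c.2 b rfl
    have hcc : (⟨b, hbC⟩ : C) * c = c * ⟨b, hbC⟩ := Subtype.ext hcb
    have := congrArg e hcc
    simp only [map_mul] at this
    simpa [hc] using this
  have hz1 : z ≠ 1 := by
    intro h
    apply hb
    have : (⟨b, hbC⟩ : C) = 1 := e.injective (by rw [← hzdef, h, map_one])
    exact congrArg Subtype.val this
  have hsub : ∀ s t : S, s = t := by
    intro s t
    by_contra hst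
    exact hz1 (freeGroup_center_triv s t hst z hzc)
  have hne : Nonempty S := by
    by_contra hne
    haveI : IsEmpty S := not_nonempty_iff.mp hne
    exact hz1 (Subsingleton.elim z 1)
  obtain ⟨x₀⟩ := hne
  have hall : ∀ u : FreeGroup S, u ∈ Subgroup.zpowers (FreeGroup.of x₀) := by
    intro u
    induction u using FreeGroup.induction_on with
    | C1 => exact one_mem _
    | of s => rw [hsub s x₀]; exact Subgroup.mem_zpowers _
    | inv_of s hs => exact inv_mem hs
    | mul u v hu hv => exact mul_mem hu hv
  refine ⟨(e.symm (FreeGroup.of x₀) : C), le_antisymm ?_ ?_⟩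
  · intro w hw
    obtain ⟨k, hk⟩ := Subgroup.mem_zpowers_iff.mp (hall (e ⟨w, hw⟩))
    have : (e.symm (FreeGroup.of x₀)) ^ k = (⟨w, hw⟩ : C) := by
      rw [← map_zpow, hk, MulEquiv.symm_apply_apply]
    refine Subgroup.mem_zpowers_iff.mpr ⟨k, ?_⟩
    rw [← SubgroupClass.coe_zpow, this]
  · exact Subgroup.zpowers_le.mpr (e.symm (FreeGroup.of x₀)).2


theorem freeGroup_left_coset_equivalence {α : Type*} (m : ℤ) (hm : 1 ≤ m) :
    Equivalence (fun (p q : {p : FreeGroup α × FreeGroup α // p.2 ≠ 1}) =>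
      p.1.2 * q.1.2 = q.1.2 * p.1.2 ∧
        ∃ y : FreeGroup α, y * p.1.2 = p.1.2 * y ∧ (p.1.1)⁻¹ * q.1.1 = y ^ m) := by
  constructor
  · intro p
    exact ⟨rfl, 1, by rw [one_mul, mul_one], by rw [inv_mul_cancel, one_zpow]⟩
  · rintro p q ⟨hc, y, hy, hxy⟩
    obtain ⟨g, hg⟩ := freeGroup_centralizer_cyclic p.1.2 p.2
    have hymem : y ∈ Subgroup.centralizer ({p.1.2} : Set (FreeGroup α)) :=
      Subgroup.mem_centralizer_iff.mpr (by rintro h rfl; exact hy.symm)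
    have hqmem : q.1.2 ∈ Subgroup.centralizer ({p.1.2} : Set (FreeGroup α)) :=
      Subgroup.mem_centralizer_iff.mpr (by rintro h rfl; exact hc)
    rw [hg] at hymem hqmem
    obtain ⟨a, ha⟩ := Subgroup.mem_zpowers_iff.mp hymem
    obtain ⟨c, hcq⟩ := Subgroup.mem_zpowers_iff.mp hqmem
    have hcomm : Commute y q.1.2 := by
      rw [← ha, ← hcq]; exact (Commute.refl g).zpow_zpow a c
    refine ⟨hc.symm, y⁻¹, hcomm.inv_left.eq, ?_⟩
    calc q.1.1⁻¹ * p.1.1 = (p.1.1⁻¹ * q.1.1)⁻¹ := by group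
      _ = (y ^ m)⁻¹ := by rw [hxy]
      _ = (y⁻¹) ^ m := (inv_zpow y m).symm
  · rintro p q r ⟨h12, y, hy, e12⟩ ⟨h23, y', hy', e23⟩
    obtain ⟨g, hg⟩ := freeGroup_centralizer_cyclic p.1.2 p.2
    have hymem : y ∈ Subgroup.centralizer ({p.1.2} : Set (FreeGroup α)) :=
      Subgroup.mem_centralizer_iff.mpr (by rintro h rfl; exact hy.symm)
    have hqmem : q.1.2 ∈ Subgroup.centralizer ({p.1.2} : Set (FreeGroup α)) :=
      Subgroup.mem_centralizer_iff.mpr (by rintro h rfl; exact h12)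
    rw [hg] at hymem hqmem
    obtain ⟨a₀, ha₀⟩ := Subgroup.mem_zpowers_iff.mp hymem
    obtain ⟨c₀, hc₀⟩ := Subgroup.mem_zpowers_iff.mp hqmem
    have hyq : Commute y q.1.2 := by
      rw [← ha₀, ← hc₀]; exact (Commute.refl g).zpow_zpow a₀ c₀
    obtain ⟨h, hh⟩ := freeGroup_centralizer_cyclic q.1.2 q.2
    have m1 : y ∈ Subgroup.centralizer ({q.1.2} : Set (FreeGroup α)) :=
      Subgroup.mem_centralizer_iff.mpr (by rintro s rfl; exact hyq.symm.eq)
    have m2 : y' ∈ Subgroup.centralizer ({q.1.2} : Set (FreeGroup α)) :=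
      Subgroup.mem_centralizer_iff.mpr (by rintro s rfl; exact hy'.symm)
    have m3 : p.1.2 ∈ Subgroup.centralizer ({q.1.2} : Set (FreeGroup α)) :=
      Subgroup.mem_centralizer_iff.mpr (by rintro s rfl; exact h12.symm)
    have m4 : r.1.2 ∈ Subgroup.centralizer ({q.1.2} : Set (FreeGroup α)) :=
      Subgroup.mem_centralizer_iff.mpr (by rintro s rfl; exact h23)
    rw [hh] at m1 m2 m3 m4
    obtain ⟨a, ha⟩ := Subgroup.mem_zpowers_iff.mp m1
    obtain ⟨b, hb⟩ := Subgroup.mem_zpowers_iff.mp m2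
    obtain ⟨i, hi⟩ := Subgroup.mem_zpowers_iff.mp m3
    obtain ⟨j, hj⟩ := Subgroup.mem_zpowers_iff.mp m4
    refine ⟨?_, h ^ (a + b), ?_, ?_⟩
    · rw [← hi, ← hj]; exact ((Commute.refl h).zpow_zpow i j).eq
    · rw [← hi]; exact ((Commute.refl h).zpow_zpow (a + b) i).eq
    · calc p.1.1⁻¹ * r.1.1 = (p.1.1⁻¹ * q.1.1) * (q.1.1⁻¹ * r.1.1) := by group
        _ = y ^ m * y' ^ m := by rw [e12, e23]
        _ = (h ^ a) ^ m * (h ^ b) ^ m := by rw [ha, hb]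
        _ = (h ^ (a + b)) ^ m := by
            rw [← zpow_mul, ← zpow_mul, ← zpow_add, ← zpow_mul, add_mul]
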